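/- Let u ∈ BMOA(𝕋), H_u the anti-linear Hankel operator, s > 0, and suppose s is H-dominant, i.e., u is not orthogonal to E_H(s) = Ker(H_u² - s²I). Then S(E_H(s) ∩ u^⊥) = E_H(s) ∩ 1^⊥, where S is the shift operator and 1 the constant function. -/

import Mathlib

open MeasureTheory Complex Real ComplexConjugate AddCircle

noncomputable section

instance fact2pi : Fact (0 < 2 * π) := ⟨by positivity⟩

abbrev Tc : Type := AddCircle (2 * π)
abbrev haarT : Measure Tc := haarAddCircle
abbrev HL2 : Type := Lp ℂ 2 haarT

def IsHardy (f : HL2) : Prop := ∀ n : ℤ, n < 0 → fourierCoeff (⇑f) n = 0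

def IsHardyFun (u : Tc → ℂ) : Prop := ∀ n : ℤ, n < 0 → fourierCoeff u n = 0

def IsInnerF (θ : Tc → ℂ) : Prop :=
  AEStronglyMeasurable θ haarT ∧ (∀ᵐ x ∂haarT, ‖θ x‖ = 1) ∧ IsHardyFun θ

def IsHankelOp (u : Tc → ℂ) (H : HL2 → HL2) : Prop :=
  MemLp u 2 haarT ∧ IsHardyFun u ∧
  (∃ C : ℝ, ∀ f, ‖H f‖ ≤ C * ‖f‖) ∧
  (∀ f g, H (f + g) = H f + H g) ∧
  (∀ (c : ℂ) (f : HL2), H (c • f) = conj c • H f) ∧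
  (∀ f, IsHardy (H f)) ∧
  (∀ f g : HL2, IsHardy g →
    Integrable (fun x => u x * conj (f x) * conj (g x)) haarT →
    (inner ℂ g (H f) : ℂ) = ∫ x, u x * conj (f x) * conj (g x) ∂haarT)

namespace HAux

lemma coeff_eq_inner (f : HL2) (n : ℤ) :
    (inner ℂ (fourierLp 2 n : HL2) f : ℂ) = fourierCoeff (⇑f) n := by
  rw [← fourierBasis_repr, fourierBasis.repr_apply_apply, ← coe_fourierBasis]

lemma ext_coeff {f g : HL2} (h : ∀ n, fourierCoeff (⇑f) n = fourierCoeff (⇑g) n) : f = g := by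
  apply fourierBasis.repr.injective
  ext n
  rw [fourierBasis_repr, fourierBasis_repr]
  exact h n

lemma fourierCoeff_congr {f g : Tc → ℂ} (h : f =ᵐ[haarT] g) (n : ℤ) :
    fourierCoeff f n = fourierCoeff g n := by
  unfold fourierCoeff
  exact integral_congr_ae (h.mono fun x hx => by simp only []; rw [hx])

lemma fourierCoeff_fourier_mul (k : ℤ) (f : Tc → ℂ) (n : ℤ) :
    fourierCoeff (fun x => fourier k x * f x) n = fourierCoeff f (n - k) := by
  unfold fourierCoeff
  refine integral_congr_ae (Filter.Eventually.of_forall fun x => ?_)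
  simp only [smul_eq_mul]
  rw [show (-(n - k) : ℤ) = -n + k by ring, fourier_add]
  ring

lemma fourierCoeff_zero_eq_integral (f : Tc → ℂ) :
    fourierCoeff f 0 = ∫ x, f x ∂haarT := by
  unfold fourierCoeff
  simp [fourier_zero]

lemma coeff_fourierLp (n m : ℤ) :
    fourierCoeff (⇑(fourierLp 2 n : HL2)) m = if m = n then 1 else 0 := by
  rw [← coeff_eq_inner]
  exact orthonormal_iff_ite.mp (orthonormal_fourier (T := 2 * π)) m n

lemma coeff_smul (c : ℂ) (x : HL2) (n : ℤ) :
    fourierCoeff (⇑(c • x)) n = c * fourierCoeff (⇑x) n := by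
  rw [fourierCoeff_congr (Lp.coeFn_smul c x) n]
  rw [show ((c • ⇑x : Tc → ℂ)) = (c • (⇑x) :) from rfl]
  rw [fourierCoeff.const_smul, smul_eq_mul]

lemma coeff_add (x y : HL2) (n : ℤ) :
    fourierCoeff (⇑(x + y)) n = fourierCoeff (⇑x) n + fourierCoeff (⇑y) n := by
  rw [fourierCoeff_congr (Lp.coeFn_add x y) n]
  unfold fourierCoeff
  rw [← integral_add]
  · exact integral_congr_ae (Filter.Eventually.of_forall fun t => by
      simp [smul_eq_mul, mul_add])
  · exact (((Lp.memLp x).integrable (by norm_num)).bdd_mul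
      ((fourier (-n)).continuous.aestronglyMeasurable)
      (Filter.Eventually.of_forall fun t => le_of_eq (Circle.norm_coe _))).congr
      (Filter.Eventually.of_forall fun t => by simp [smul_eq_mul])
  · exact (((Lp.memLp y).integrable (by norm_num)).bdd_mul
      ((fourier (-n)).continuous.aestronglyMeasurable)
      (Filter.Eventually.of_forall fun t => le_of_eq (Circle.norm_coe _))).congr
      (Filter.Eventually.of_forall fun t => by simp [smul_eq_mul])

lemma integrable_mul_conj (f g : HL2) :
    Integrable (fun x => f x * conj (g x)) haarT := by
  have h := L2.integrable_inner (𝕜 := ℂ) g f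
  simp only [RCLike.inner_apply] at h
  exact h.congr (Filter.Eventually.of_forall fun x => by ring)

lemma integrable_triple (u f : HL2) (m : ℤ) :
    Integrable (fun x => u x * conj (f x) * fourier m x) haarT := by
  have h := (integrable_mul_conj u f).bdd_mul
    ((fourier m).continuous.aestronglyMeasurable)
    (Filter.Eventually.of_forall fun t => le_of_eq (Circle.norm_coe _))
  exact h.congr (Filter.Eventually.of_forall fun x => by ring)

lemma memℒp_mulFourier (k : ℤ) (f : HL2) :
    MemLp (fun x => fourier k x * f x) 2 haarT := by
  refine MemLp.of_le_mul (c := 1) (Lp.memLp f)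
    (((fourier k).continuous.aestronglyMeasurable).mul (Lp.aestronglyMeasurable f)) ?_
  refine Filter.Eventually.of_forall fun x => ?_
  rw [norm_mul, show ‖fourier k x‖ = 1 from Circle.norm_coe _, one_mul]

def mulFourier (k : ℤ) (f : HL2) : HL2 := (memℒp_mulFourier k f).toLp _

lemma coeFn_mulFourier (k : ℤ) (f : HL2) :
    ⇑(mulFourier k f) =ᵐ[haarT] fun x => fourier k x * f x :=
  MemLp.coeFn_toLp _

lemma coeff_mulFourier (k : ℤ) (f : HL2) (n : ℤ) :
    fourierCoeff (⇑(mulFourier k f)) n = fourierCoeff (⇑f) (n - k) := by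
  rw [fourierCoeff_congr (coeFn_mulFourier k f) n, fourierCoeff_fourier_mul]


lemma hardy_fourierLp {n : ℤ} (hn : 0 ≤ n) : IsHardy (fourierLp 2 n : HL2) := by
  intro m hm
  rw [coeff_fourierLp]
  simp [show m ≠ n by omega]

lemma integrable_char (u f : HL2) (m : ℤ) :
    Integrable (fun x => u x * conj (f x) * conj ((fourierLp 2 m : HL2) x)) haarT := by
  refine (integrable_triple u f (-m)).congr ?_
  filter_upwards [coeFn_fourierLp 2 m] with x hx
  rw [hx, ← fourier_neg]

lemma coeff_H_eq (u : HL2) (H : HL2 → HL2) (hH : IsHankelOp (⇑u) H)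
    (f : HL2) (n : ℤ) (hn : 0 ≤ n) :
    fourierCoeff (⇑(H f)) n = ∫ x, u x * conj (f x) * fourier (-n) x ∂haarT := by
  obtain ⟨hu2, huH, hCb, haddH, hsmlH, hHdy, hchar⟩ := hH
  have key := hchar f (fourierLp 2 n) (hardy_fourierLp hn) (integrable_char u f n)
  rw [coeff_eq_inner] at key
  rw [key]
  refine integral_congr_ae ?_
  filter_upwards [coeFn_fourierLp 2 n] with x hx
  rw [hx, ← fourier_neg]

lemma coeff_H_zero (u : HL2) (H : HL2 → HL2) (hH : IsHankelOp (⇑u) H) (f : HL2) :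
    fourierCoeff (⇑(H f)) 0 = conj (inner ℂ u f : ℂ) := by
  rw [coeff_H_eq u H hH f 0 le_rfl, L2.inner_def, ← integral_conj]
  refine integral_congr_ae (Filter.Eventually.of_forall fun x => ?_)
  simp only [RCLike.inner_apply, map_mul, Complex.conj_conj, neg_zero, fourier_zero, mul_one]
  exact mul_comm _ _

lemma H_continuous (u : HL2) (H : HL2 → HL2) (hH : IsHankelOp (⇑u) H) : Continuous H := by
  obtain ⟨hu2, huH, ⟨C, hC⟩, haddH, hsmlH, hHdy, hchar⟩ := hH
  have hHneg : ∀ x, H (-x) = - H x := fun x => by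
    have h := hsmlH (-1) x; simpa using h
  have hHsub : ∀ x y, H (x - y) = H x - H y := fun x y => by
    rw [sub_eq_add_neg, haddH, hHneg, sub_eq_add_neg]
  have hlip : LipschitzWith (Real.toNNReal (max C 0)) H := by
    refine LipschitzWith.of_dist_le_mul fun x y => ?_
    rw [dist_eq_norm, dist_eq_norm, ← hHsub]
    calc ‖H (x - y)‖ ≤ C * ‖x - y‖ := hC _
      _ ≤ max C 0 * ‖x - y‖ :=
        mul_le_mul_of_nonneg_right (le_max_left _ _) (norm_nonneg _)
      _ = _ := by rw [Real.coe_toNNReal _ (le_max_right C 0)]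
  exact hlip.continuous

lemma hankel_symm (u : HL2) (H : HL2 → HL2) (hH : IsHankelOp (⇑u) H)
    {f g : HL2} (hf : IsHardy f) (hg : IsHardy g) :
    (inner ℂ g (H f) : ℂ) = inner ℂ f (H g) := by
  obtain ⟨hu2, huH, hCb, haddH, hsmlH, hHdy, hchar⟩ := id hH
  set φ : HL2 → ℂ := fun x => (inner ℂ g (H x) : ℂ) with hφ
  have hφadd : ∀ x y, φ (x + y) = φ x + φ y := fun x y => by
    simp only [hφ, haddH, inner_add_right]
  have hφcont : Continuous φ := Continuous.inner continuous_const (H_continuous u H hH)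
  have hsum1 : HasSum (fun i : ℤ => φ (fourierCoeff (⇑f) i • fourierLp 2 i)) (φ f) :=
    (hasSum_fourier_series_L2 f).map (AddMonoidHom.mk' φ hφadd) hφcont
  have hsum2 : HasSum (fun i : ℤ => fourierCoeff (⇑(H g)) i * (inner ℂ f (fourierLp 2 i) : ℂ))
      ((inner ℂ f (H g) : ℂ)) := by
    have h := (hasSum_fourier_series_L2 (H g)).mapL (innerSL ℂ f)
    simpa only [innerSL_apply_apply, inner_smul_right] using h
  have hcongr : ∀ i : ℤ, φ (fourierCoeff (⇑f) i • fourierLp 2 i)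
      = fourierCoeff (⇑(H g)) i * (inner ℂ f (fourierLp 2 i) : ℂ) := by
    intro i
    have hIf : (inner ℂ f (fourierLp 2 i : HL2) : ℂ) = conj (fourierCoeff (⇑f) i) := by
      rw [← inner_conj_symm, coeff_eq_inner]
    simp only [hφ, hsmlH, inner_smul_right, hIf]
    rcases lt_or_ge i 0 with hi | hi
    · rw [hf i hi]; simp
    · rw [mul_comm]
      congr 1
      have key := hchar (fourierLp 2 i) g hg ?_
      · rw [key, coeff_H_eq u H hH g i hi]
        refine integral_congr_ae ?_
        filter_upwards [coeFn_fourierLp 2 i] with x hx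
        rw [hx, ← fourier_neg]
        ring
      · refine (integrable_triple u g (-i)).congr ?_
        filter_upwards [coeFn_fourierLp 2 i] with x hx
        rw [hx, ← fourier_neg]
        ring
  have heq : (fun i : ℤ => φ (fourierCoeff (⇑f) i • fourierLp 2 i))
      = fun i : ℤ => fourierCoeff (⇑(H g)) i * (inner ℂ f (fourierLp 2 i) : ℂ) :=
    funext hcongr
  rw [heq] at hsum1
  exact hsum1.unique hsum2

end HAux

def IsShiftAdjOf (H K : HL2 → HL2) : Prop :=
  ∀ f, IsHardy (K f) ∧
    ∀ n : ℤ, 0 ≤ n → fourierCoeff (⇑(K f)) n = fourierCoeff (⇑(H f)) (n + 1)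

def IsSzego (P : HL2 →L[ℂ] HL2) : Prop :=
  (∀ f, IsHardy (P f)) ∧ ∀ f g : HL2, IsHardy g → (inner ℂ g (f - P f) : ℂ) = 0

def MemKz (θ : Tc → ℂ) (f : HL2) : Prop :=
  IsHardy f ∧ ∀ h w : HL2, IsHardy h →
    (⇑w =ᵐ[haarT] fun x => fourier 1 x * θ x * h x) → (inner ℂ w f : ℂ) = 0

def MemK (θ : Tc → ℂ) (f : HL2) : Prop :=
  IsHardy f ∧ ∀ h w : HL2, IsHardy h →
    (⇑w =ᵐ[haarT] fun x => θ x * h x) → (inner ℂ w f : ℂ) = 0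


/-- in the `H`-dominant case, the shift `S` maps `E_H(s) ∩ u^⊥` onto
`E_H(s) ∩ 𝟙^⊥`. -/
theorem shift_maps_EK_onto_EH_perp_one
    (u : HL2) (hu : IsHardy u) (H : HL2 → HL2) (hH : IsHankelOp (⇑u) H)
    (s : ℝ) (hs : 0 < s)
    (hdom : ∃ f : HL2, IsHardy f ∧ H (H f) = ((s : ℂ) ^ 2) • f ∧ (inner ℂ u f : ℂ) ≠ 0) :
    {g : HL2 | ∃ f : HL2,
        (IsHardy f ∧ H (H f) = ((s : ℂ) ^ 2) • f ∧ (inner ℂ u f : ℂ) = 0) ∧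
        ⇑g =ᵐ[haarT] fun x => fourier 1 x * f x} =
    {g : HL2 | IsHardy g ∧ H (H g) = ((s : ℂ) ^ 2) • g ∧ (∫ x, g x ∂haarT) = 0} := by
  obtain ⟨hu2, huH, hCb, haddH, hsmlH, hHdy, hchar⟩ := id hH
  obtain ⟨f₀, hf₀H, hf₀eig, hf₀u⟩ := hdom
  have hsq : conj ((s:ℂ)^2) = (s:ℂ)^2 := by
    rw [map_pow, Complex.conj_ofReal]
  have hhH : IsHardy (H f₀) := hHdy f₀
  have hh0 : fourierCoeff (⇑(H f₀)) 0 = conj (inner ℂ u f₀ : ℂ) :=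
    HAux.coeff_H_zero u H hH f₀
  ext g
  simp only [Set.mem_setOf_eq]
  constructor
  · rintro ⟨f, ⟨hf, heig, horth⟩, hg⟩
    have hgco : ∀ n : ℤ, fourierCoeff (⇑g) n = fourierCoeff (⇑f) (n - 1) := fun n => by
      rw [HAux.fourierCoeff_congr hg n, HAux.fourierCoeff_fourier_mul]
    have hgH : IsHardy g := fun n hn => by
      rw [hgco n]; exact hf _ (by omega)
    have hg0 : fourierCoeff (⇑g) 0 = 0 := by
      rw [hgco 0]; exact hf _ (by omega)
    have hHf0 : fourierCoeff (⇑(H f)) 0 = 0 := by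
      rw [HAux.coeff_H_zero u H hH f, horth, map_zero]
    have hHg : H g = HAux.mulFourier (-1) (H f) := by
      apply HAux.ext_coeff
      intro n
      rw [HAux.coeff_mulFourier]
      rcases lt_or_ge n 0 with hn | hn
      · rcases eq_or_lt_of_le (show n ≤ -1 by omega) with h1 | h1
        · subst h1
          rw [hHdy g _ hn, show (-1 - (-1) : ℤ) = 0 by norm_num, hHf0]
        · rw [hHdy g _ hn, hHdy f _ (show n - (-1) < 0 by omega)]
      · rw [HAux.coeff_H_eq u H hH g n hn,
            HAux.coeff_H_eq u H hH f (n - (-1)) (by omega)]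
        refine integral_congr_ae ?_
        filter_upwards [hg] with x hx
        rw [hx, map_mul, ← fourier_neg,
            show (-(n - (-1)) : ℤ) = -1 + -n by ring, fourier_add]
        ring
    have hHgae : ⇑(H g) =ᵐ[haarT] fun x => fourier (-1) x * (H f) x := by
      rw [hHg]; exact HAux.coeFn_mulFourier _ _
    have hXco : ∀ n : ℤ, 1 ≤ n →
        fourierCoeff (⇑(H (H g))) n = ((s:ℂ)^2) * fourierCoeff (⇑g) n := by
      intro n hn
      rw [HAux.coeff_H_eq u H hH (H g) n (by omega)]
      have e1 : (∫ x, u x * conj ((H g) x) * fourier (-n) x ∂haarT)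
          = ∫ x, u x * conj ((H f) x) * fourier (-(n-1)) x ∂haarT := by
        refine integral_congr_ae ?_
        filter_upwards [hHgae] with x hx
        rw [hx, map_mul, ← fourier_neg,
            show (-(n-1) : ℤ) = -(-1) + -n by ring, fourier_add]
        ring
      rw [e1, ← HAux.coeff_H_eq u H hH (H f) (n-1) (by omega), heig,
          HAux.coeff_smul, hgco n]
    set B := fourierCoeff (⇑(H (H g))) 0 with hB
    have hXdec : H (H g) = ((s:ℂ)^2) • g + B • (fourierLp 2 0 : HL2) := by
      apply HAux.ext_coeff
      intro n
      rw [HAux.coeff_add, HAux.coeff_smul, HAux.coeff_smul, HAux.coeff_fourierLp]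
      rcases lt_trichotomy n 0 with hn | hn | hn
      · rw [hHdy (H g) _ hn, hgH _ hn]
        simp [show n ≠ 0 by omega]
      · subst hn
        rw [hg0, hB]
        simp
      · rw [hXco n (by omega)]
        simp [show n ≠ 0 by omega]
    have key1 : (inner ℂ (H f₀) (H (H g)) : ℂ) = ((s:ℂ)^2) * inner ℂ (H f₀) g := by
      rw [HAux.hankel_symm u H hH (hHdy g) hhH, hf₀eig, inner_smul_right,
          show (inner ℂ (H g) f₀ : ℂ) = conj (inner ℂ f₀ (H g)) from (inner_conj_symm _ _).symm,
          HAux.hankel_symm u H hH hgH hf₀H, inner_conj_symm]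
    have key2 : B * (inner ℂ (H f₀) (fourierLp 2 0 : HL2) : ℂ) = 0 := by
      have h2 : (inner ℂ (H f₀) (H (H g)) : ℂ)
          = ((s:ℂ)^2) * inner ℂ (H f₀) g + B * inner ℂ (H f₀) (fourierLp 2 0 : HL2) := by
        rw [hXdec, inner_add_right, inner_smul_right, inner_smul_right]
      rw [key1] at h2
      linear_combination h2.symm
    have hy : (inner ℂ (H f₀) (fourierLp 2 0 : HL2) : ℂ) = (inner ℂ u f₀ : ℂ) := by
      rw [show (inner ℂ (H f₀) (fourierLp 2 0 : HL2) : ℂ)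
            = conj (inner ℂ (fourierLp 2 0 : HL2) (H f₀)) from (inner_conj_symm _ _).symm,
          HAux.coeff_eq_inner, hh0, Complex.conj_conj]
    have hB0 : B = 0 := by
      rw [hy] at key2
      exact (mul_eq_zero.mp key2).resolve_right hf₀u
    have heig' : H (H g) = ((s:ℂ)^2) • g := by
      rw [hXdec, hB0, zero_smul, add_zero]
    have hgint : (∫ x, g x ∂haarT) = 0 := by
      rw [← HAux.fourierCoeff_zero_eq_integral, hg0]
    exact ⟨hgH, heig', hgint⟩
  · rintro ⟨hgH, heig, hgint⟩
    have hg0 : fourierCoeff (⇑g) 0 = 0 := by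
      rw [HAux.fourierCoeff_zero_eq_integral]; exact hgint
    set f := HAux.mulFourier (-1) g with hfdef
    have hfae : ⇑f =ᵐ[haarT] fun x => fourier (-1) x * g x := HAux.coeFn_mulFourier _ _
    have hfco : ∀ n : ℤ, fourierCoeff (⇑f) n = fourierCoeff (⇑g) (n + 1) := fun n => by
      rw [hfdef, HAux.coeff_mulFourier, show n - (-1) = n + 1 by ring]
    have hfH : IsHardy f := fun n hn => by
      rw [hfco n]
      rcases lt_or_eq_of_le (show n + 1 ≤ 0 by omega) with h | h
      · exact hgH _ h
      · rw [h]; exact hg0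
    have hgae : ⇑g =ᵐ[haarT] fun x => fourier 1 x * f x := by
      have hgf : g = HAux.mulFourier 1 f := by
        apply HAux.ext_coeff; intro n
        rw [HAux.coeff_mulFourier, hfco]
        congr 1; ring
      rw [hgf]; exact HAux.coeFn_mulFourier _ _
    set γ := fourierCoeff (⇑(H f)) 0 with hγ
    have hHfco : ∀ n : ℤ, 1 ≤ n →
        fourierCoeff (⇑(H f)) n = fourierCoeff (⇑(H g)) (n - 1) := by
      intro n hn
      rw [HAux.coeff_H_eq u H hH f n (by omega), HAux.coeff_H_eq u H hH g (n-1) (by omega)]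
      refine integral_congr_ae ?_
      filter_upwards [hfae] with x hx
      rw [hx, map_mul, ← fourier_neg, show (-(n-1):ℤ) = -(-1) + -n by ring, fourier_add]
      ring
    have hHfdec : H f = HAux.mulFourier 1 (H g) + γ • (fourierLp 2 0 : HL2) := by
      apply HAux.ext_coeff; intro n
      rw [HAux.coeff_add, HAux.coeff_smul, HAux.coeff_fourierLp, HAux.coeff_mulFourier]
      rcases lt_trichotomy n 0 with hn | hn | hn
      · rw [hHdy f _ hn, hHdy g _ (show n - 1 < 0 by omega)]
        simp [show n ≠ 0 by omega]
      · subst hn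
        rw [hHdy g _ (show (0:ℤ) - 1 < 0 by norm_num), hγ]
        simp
      · rw [hHfco n (by omega)]
        simp [show n ≠ 0 by omega]
    have hHfae : ⇑(H f) =ᵐ[haarT] fun x => fourier 1 x * (H g) x + γ := by
      rw [hHfdec]
      filter_upwards [Lp.coeFn_add (HAux.mulFourier 1 (H g)) (γ • (fourierLp 2 0 : HL2)),
        HAux.coeFn_mulFourier 1 (H g), Lp.coeFn_smul γ (fourierLp 2 0 : HL2),
        coeFn_fourierLp 2 0] with x h1 h2 h3 h4
      simp only [h1, Pi.add_apply, h2, h3, Pi.smul_apply, h4, fourier_zero, smul_eq_mul,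
        mul_one]
    have huint : ∀ n : ℤ, Integrable (fun x => u x * fourier (-n) x) haarT := fun n =>
      (((Lp.memLp u).integrable (by norm_num)).bdd_mul
        ((fourier (-n)).continuous.aestronglyMeasurable)
        (Filter.Eventually.of_forall fun t => le_of_eq (Circle.norm_coe _))).congr
        (Filter.Eventually.of_forall fun x => by ring)
    have hucoeff : ∀ n : ℤ, (∫ x, u x * fourier (-n) x ∂haarT) = fourierCoeff (⇑u) n := by
      intro n
      unfold fourierCoeff
      refine integral_congr_ae (Filter.Eventually.of_forall fun x => ?_)
      simp only [smul_eq_mul]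
      ring
    have hHHfco : ∀ n : ℤ, fourierCoeff (⇑(H (H f))) n
        = ((s:ℂ)^2) * fourierCoeff (⇑f) n + conj γ * fourierCoeff (⇑u) n := by
      intro n
      rcases lt_or_ge n 0 with hn | hn
      · rw [hHdy (H f) _ hn, hfH _ hn, hu _ hn]
        ring
      · rw [HAux.coeff_H_eq u H hH (H f) n hn]
        have esplit : (∫ x, u x * conj ((H f) x) * fourier (-n) x ∂haarT)
            = (∫ x, u x * conj ((H g) x) * fourier (-(n+1)) x ∂haarT)
              + ∫ x, conj γ * (u x * fourier (-n) x) ∂haarT := by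
          rw [← integral_add (HAux.integrable_triple u (H g) (-(n+1)))
            ((huint n).const_mul (conj γ))]
          refine integral_congr_ae ?_
          filter_upwards [hHfae] with x hx
          rw [hx, map_add, map_mul, ← fourier_neg,
              show (-(n+1):ℤ) = -1 + -n by ring, fourier_add]
          ring
        rw [esplit, ← HAux.coeff_H_eq u H hH (H g) (n+1) (by omega), heig,
            HAux.coeff_smul, ← hfco n, integral_const_mul, hucoeff n]
    have hHHf : H (H f) = ((s:ℂ)^2) • f + conj γ • u := by
      apply HAux.ext_coeff; intro n
      rw [hHHfco n, HAux.coeff_add, HAux.coeff_smul, HAux.coeff_smul]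
    have key1 : (inner ℂ f₀ (H (H f)) : ℂ) = ((s:ℂ)^2) * inner ℂ f₀ f := by
      rw [HAux.hankel_symm u H hH (hHdy f) hf₀H,
          show (inner ℂ (H f) (H f₀) : ℂ) = conj (inner ℂ (H f₀) (H f)) from
            (inner_conj_symm _ _).symm,
          HAux.hankel_symm u H hH hfH hhH, hf₀eig, inner_smul_right, map_mul, hsq,
          inner_conj_symm]
    have key2 : conj γ * (inner ℂ f₀ u : ℂ) = 0 := by
      have h2 : (inner ℂ f₀ (H (H f)) : ℂ)
          = ((s:ℂ)^2) * inner ℂ f₀ f + conj γ * inner ℂ f₀ u := by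
        rw [hHHf, inner_add_right, inner_smul_right, inner_smul_right]
      rw [key1] at h2
      linear_combination h2.symm
    have hf₀u' : (inner ℂ f₀ u : ℂ) ≠ 0 := fun hc => hf₀u (by
      rw [show (inner ℂ u f₀ : ℂ) = conj (inner ℂ f₀ u) from (inner_conj_symm _ _).symm,
        hc, map_zero])
    have hγ0 : γ = 0 := by
      have hc := (mul_eq_zero.mp key2).resolve_right hf₀u'
      rw [← Complex.conj_conj γ, hc, map_zero]
    have heigf : H (H f) = ((s:ℂ)^2) • f := by
      rw [hHHf, hγ0, map_zero, zero_smul, add_zero]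
    have horthf : (inner ℂ u f : ℂ) = 0 := by
      have h0 : fourierCoeff (⇑(H f)) 0 = 0 := by rw [← hγ]; exact hγ0
      rw [HAux.coeff_H_zero u H hH f] at h0
      rw [← Complex.conj_conj (inner ℂ u f : ℂ), h0, map_zero]
    exact ⟨f, ⟨hfH, heigf, horthf⟩, hgae⟩

end
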